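/- Let p ≥ 5 be a prime, k a primitive root mod p, and G = ⟨s, t | t^p = s^{p-1} = 1, s⁻¹ t s = t^k⟩ the semidirect product C_p ⋊ C_{p-1} with C_{p-1} acting faithfully. Then there is no automorphism of G sending s to s⁻¹. -/

import Mathlib

/-- Relations for the presentation `⟨s, t | t^p = s^(p-1) = 1, s⁻¹ t s = t^k⟩`,
with `s = of 0` and `t = of 1`. -/
def affineRels (p k : ℕ) : Set (FreeGroup (Fin 2)) :=
  {FreeGroup.of 1 ^ p, FreeGroup.of 0 ^ (p - 1),
    (FreeGroup.of 0)⁻¹ * FreeGroup.of 1 * FreeGroup.of 0 * (FreeGroup.of 1 ^ k)⁻¹}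

/-- For a prime `p ≥ 5` and `k` a primitive root mod `p`, no automorphism of
`G = C_p ⋊ C_{p-1} = ⟨s, t | t^p = s^(p-1) = 1, s⁻¹ t s = t^k⟩` sends `s` to `s⁻¹`. -/
theorem no_aut_inverting_s {p k : ℕ} (hp : p.Prime) (hp5 : 5 ≤ p)
    (hk : orderOf (k : ZMod p) = p - 1) :
    ∀ α : PresentedGroup (affineRels p k) ≃* PresentedGroup (affineRels p k),
      α (PresentedGroup.of 0) ≠ (PresentedGroup.of 0)⁻¹ := by
  intro α hα
  haveI : Fact p.Prime := ⟨hp⟩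
  set G := PresentedGroup (affineRels p k) with hG
  set κ : ZMod p := (k : ZMod p) with hκdef
  have hκpow : κ ^ (p - 1) = 1 := hk ▸ pow_orderOf_eq_one κ
  have hκ : κ ≠ 0 := by
    intro h
    rw [h, zero_pow (by omega : p - 1 ≠ 0)] at hκpow
    exact zero_ne_one hκpow
  have hκsq : κ * κ ≠ 1 := by
    intro h
    have h2 : κ ^ 2 = 1 := by rw [pow_two]; exact h
    have hdvd := orderOf_dvd_of_pow_eq_one h2
    rw [hk] at hdvd
    have := Nat.le_of_dvd (by norm_num) hdvd
    omega
  -- the target permutation group and the two affine generators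
  let σ : Equiv.Perm (ZMod p) :=
    ⟨fun x => κ⁻¹ * x, fun x => κ * x,
      fun x => by show κ * (κ⁻¹ * x) = x; rw [← mul_assoc, mul_inv_cancel₀ hκ, one_mul],
      fun x => by show κ⁻¹ * (κ * x) = x; rw [← mul_assoc, inv_mul_cancel₀ hκ, one_mul]⟩
  let τ : Equiv.Perm (ZMod p) :=
    ⟨fun x => x + 1, fun x => x - 1,
      fun x => add_sub_cancel_right x 1, fun x => sub_add_cancel x 1⟩
  have hσapp : ∀ x, σ x = κ⁻¹ * x := fun _ => rfl
  have hσinv : ∀ x, σ⁻¹ x = κ * x := fun _ => rfl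
  have hτapp : ∀ x, τ x = x + 1 := fun _ => rfl
  have hσpow : ∀ (n : ℕ) (x : ZMod p), (σ ^ n) x = κ⁻¹ ^ n * x := by
    intro n
    induction n with
    | zero => intro x; simp
    | succ n ih =>
        intro x
        rw [pow_succ, Equiv.Perm.mul_apply, hσapp, ih, pow_succ]
        ring
  have hτpow : ∀ (n : ℕ) (x : ZMod p), (τ ^ n) x = x + n := by
    intro n
    induction n with
    | zero => intro x; simp
    | succ n ih =>
        intro x
        rw [pow_succ, Equiv.Perm.mul_apply, hτapp, ih]
        push_cast
        ring
  -- the relations hold for σ, τ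
  have hrels : ∀ r ∈ affineRels p k, FreeGroup.lift ![σ, τ] r = 1 := by
    intro r hr
    simp only [affineRels, Set.mem_insert_iff, Set.mem_singleton_iff] at hr
    rcases hr with rfl | rfl | rfl
    ·
      rw [map_pow, FreeGroup.lift_apply_of]
      ext x
      simp [hτpow p x, ZMod.natCast_self]
    · rw [map_pow, FreeGroup.lift_apply_of]
      ext x
      simp only [Matrix.cons_val_zero, hσpow (p-1) x, inv_pow, hκpow, inv_one, one_mul,
        Equiv.Perm.one_apply]
    · simp only [map_mul, map_inv, map_pow, FreeGroup.lift_apply_of, Matrix.cons_val_zero,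
        Matrix.cons_val_one, Matrix.head_cons]
      rw [mul_inv_eq_one]
      ext x
      rw [Equiv.Perm.mul_apply, Equiv.Perm.mul_apply, hσinv, hσapp, hτapp, hτpow k x]
      field_simp
      rfl
  -- the induced homomorphism
  let f : G →* Equiv.Perm (ZMod p) := PresentedGroup.toGroup hrels
  have hf0 : f (PresentedGroup.of 0) = σ := PresentedGroup.toGroup.of hrels
  have hf1 : f (PresentedGroup.of 1) = τ := PresentedGroup.toGroup.of hrels
  -- relations in G
  have hmk : ∀ r ∈ affineRels p k, PresentedGroup.mk (affineRels p k) r = 1 :=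
    fun r hr => (QuotientGroup.eq_one_iff r).mpr (Subgroup.subset_normalClosure hr)
  have e1 : (PresentedGroup.of 1 : G) ^ p = 1 := by
    have := hmk (FreeGroup.of 1 ^ p) (by left; rfl)
    rwa [map_pow] at this
  have e3 : (PresentedGroup.of 0 : G)⁻¹ * PresentedGroup.of 1 * PresentedGroup.of 0
      = (PresentedGroup.of 1 : G) ^ k := by
    have := hmk ((FreeGroup.of 0)⁻¹ * FreeGroup.of 1 * FreeGroup.of 0 * (FreeGroup.of 1 ^ k)⁻¹)
      (by right; right; rfl)
    rw [map_mul, map_mul, map_mul, map_inv, map_inv, map_pow] at this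
    exact mul_inv_eq_one.mp this
  -- the image of t under α
  set y : G := α (PresentedGroup.of 1) with hy
  have hy1 : y ^ p = 1 := by rw [← map_pow, e1, map_one]
  have hy2 : PresentedGroup.of 0 * y * (PresentedGroup.of 0)⁻¹ = y ^ k := by
    have h := congrArg α e3
    simp only [map_mul, map_inv, map_pow, hα, inv_inv] at h
    exact h
  -- the affine subgroup
  let Aff : Subgroup (Equiv.Perm (ZMod p)) :=
    { carrier := {g | ∃ c d : ZMod p, c ≠ 0 ∧ ∀ x, g x = c * x + d}
      one_mem' := ⟨1, 0, one_ne_zero, fun x => by simp⟩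
      mul_mem' := by
        rintro a b ⟨c, d, hc, ha⟩ ⟨c', d', hc', hb⟩
        exact ⟨c * c', c * d' + d, mul_ne_zero hc hc', fun x => by
          rw [Equiv.Perm.mul_apply, hb, ha]; ring⟩
      inv_mem' := by
        rintro g ⟨c, d, hc, hg⟩
        refine ⟨c⁻¹, -(c⁻¹ * d), inv_ne_zero hc, fun x => ?_⟩
        have key : g (c⁻¹ * x + -(c⁻¹ * d)) = x := by
          rw [hg]
          field_simp
          ring
        conv_lhs => rw [← key]
        exact Equiv.symm_apply_apply g _ }
  have hAffmem : ∀ g : G, f g ∈ Aff := by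
    have hle : f.range ≤ Aff := by
      rw [MonoidHom.range_eq_map, ← PresentedGroup.closure_range_of (affineRels p k),
        MonoidHom.map_closure, Subgroup.closure_le]
      rintro x ⟨u, ⟨i, rfl⟩, rfl⟩
      match i with
      | 0 => exact hf0 ▸ ⟨κ⁻¹, 0, inv_ne_zero hκ, fun x => by rw [hσapp, add_zero]⟩
      | 1 => exact hf1 ▸ ⟨1, 1, one_ne_zero, fun x => by rw [hτapp, one_mul]⟩
    exact fun g => hle ⟨g, rfl⟩
  obtain ⟨c, d, hc, hcd⟩ := hAffmem y
  set π : Equiv.Perm (ZMod p) := f y with hπ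
  have hπp : π ^ p = 1 := by rw [hπ, ← map_pow, hy1, map_one]
  have hdiff : ∀ (n : ℕ) (x z : ZMod p), (π ^ n) x - (π ^ n) z = c ^ n * (x - z) := by
    intro n
    induction n with
    | zero => intro x z; simp
    | succ n ih =>
        intro x z
        rw [pow_succ', Equiv.Perm.mul_apply, Equiv.Perm.mul_apply, hcd, hcd]
        have h := ih x z
        calc c * (π ^ n) x + d - (c * (π ^ n) z + d)
            = c * ((π ^ n) x - (π ^ n) z) := by ring
          _ = c * (c ^ n * (x - z)) := by rw [h]
          _ = c ^ (n + 1) * (x - z) := by ring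
  have hcp : c ^ p = 1 := by
    have h := hdiff p 1 0
    rw [hπp] at h
    simpa using h.symm
  have hc1 : c = 1 := by
    have hcpc : c ^ p = c := by
      have hpe : c ^ (p - 1) * c = c ^ p := by
        rw [← pow_succ]
        congr 1
        omega
      rw [← hpe, ZMod.pow_card_sub_one_eq_one hc, one_mul]
    exact hcpc.symm.trans hcp
  have hcd1 : ∀ x, π x = x + d := fun x => by rw [hcd x, hc1, one_mul]
  have hπpow : ∀ (n : ℕ) (x : ZMod p), (π ^ n) x = x + n * d := by
    intro n
    induction n with
    | zero => intro x; simp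
    | succ n ih =>
        intro x
        rw [pow_succ', Equiv.Perm.mul_apply, hcd1, ih]
        push_cast
        ring
  have h2 : σ * π * σ⁻¹ = π ^ k := by
    have h := congrArg f hy2
    simp only [map_mul, map_inv, map_pow, hf0, ← hπ] at h
    exact h
  have h0 : σ (π (σ⁻¹ 0)) = (π ^ k) 0 := by
    have := congrArg (fun g : Equiv.Perm (ZMod p) => g 0) h2
    simpa [Equiv.Perm.mul_apply] using this
  rw [hσinv, mul_zero, hcd1, zero_add, hσapp, hπpow k 0, zero_add, ← hκdef] at h0
  have hd0 : d = 0 := by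
    by_contra hd
    apply hκsq
    have h3 : κ * (κ⁻¹ * d) = κ * (κ * d) := by rw [h0]
    rw [← mul_assoc, mul_inv_cancel₀ hκ, one_mul, ← mul_assoc] at h3
    have h4 : κ * κ * d = 1 * d := by rw [← h3, one_mul]
    exact mul_right_cancel₀ hd h4
  have hπ1 : π = 1 := Equiv.ext fun x => by rw [hcd1 x, hd0, add_zero]; rfl
  -- generation argument: τ would have to fix 0, contradiction
  have hrange : Set.range (PresentedGroup.of : Fin 2 → G)
      = {PresentedGroup.of 0, PresentedGroup.of 1} := by
    ext g
    constructor
    · rintro ⟨i, rfl⟩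
      match i with
      | 0 => exact Or.inl rfl
      | 1 => exact Or.inr rfl
    · rintro (rfl | rfl)
      exacts [⟨0, rfl⟩, ⟨1, rfl⟩]
  have htop : Subgroup.closure ({(PresentedGroup.of 0 : G)⁻¹, y} : Set G) = ⊤ := by
    have h1 : Subgroup.closure ({PresentedGroup.of 0, PresentedGroup.of 1} : Set G) = ⊤ := by
      rw [← hrange]; exact PresentedGroup.closure_range_of _
    have h5 := congrArg (Subgroup.map α.toMonoidHom) h1
    rw [MonoidHom.map_closure, Set.image_pair,
      Subgroup.map_top_of_surjective _ α.surjective] at h5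
    rw [show α.toMonoidHom (PresentedGroup.of 0) = (PresentedGroup.of 0)⁻¹ from hα,
      show α.toMonoidHom (PresentedGroup.of 1) = y from rfl] at h5
    exact h5
  have hτmem : τ ∈ Subgroup.closure ({σ⁻¹, (1 : Equiv.Perm (ZMod p))} : Set _) := by
    have h3 : PresentedGroup.of 1 ∈ Subgroup.closure ({(PresentedGroup.of 0 : G)⁻¹, y} : Set G) :=
      htop ▸ Subgroup.mem_top _
    have h4 := Subgroup.mem_map_of_mem f h3
    rw [MonoidHom.map_closure, Set.image_pair, map_inv, hf0, hf1, ← hπ, hπ1] at h4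
    exact h4
  have hfix : ∀ g ∈ Subgroup.closure ({σ⁻¹, (1 : Equiv.Perm (ZMod p))} : Set _),
      g 0 = 0 := by
    intro g hg
    refine Subgroup.closure_induction ?_ ?_ ?_ ?_ hg
    · rintro x (rfl | rfl)
      · rw [hσinv, mul_zero]
      · rfl
    · rfl
    · intro a b _ _ ha hb
      rw [Equiv.Perm.mul_apply, hb, ha]
    · intro a _ ha
      conv_lhs => rw [← ha]
      exact Equiv.symm_apply_apply a 0
  have hcontra := hfix τ hτmem
  rw [hτapp, zero_add] at hcontra
  exact one_ne_zero hcontra
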